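/- Let (c_{l,μ,i₁,…,i_n}) be a finitely supported family of elements of L indexed by (n+2)-tuples (l,μ,i₁,…,i_n) of nonnegative integers. If the L-linear combination Σ c_{l,μ,i₁,…,i_n}·(τ^l ∘ d_s^μ ∘ Δ₁^{i₁} ∘ … ∘ Δ_n^{i_n}), formed in the L-vector space Maps(F̂_{n+1}, F̂_{n+1}), is the zero map on F̂_{n+1}, then every coefficient c_{l,μ,i₁,…,i_n} is zero. (Uniqueness of the canonical representation of elements of the Carlitz ring 𝔄_{n+1}.) -/

import Mathlib

/-!
Setting: `q = p ^ e`, `L` an algebraically closed field of characteristic `p`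
containing `F_q(x)` (via the ring embedding `φ`), `root` the unique `q`-th root map
on `L`.  `CIdx n` indexes the basis monomials `e(m, k₁, …, k_n)` (with
`m ≤ min(k₁, …, k_n)`) of the space `F̂_{n+1} = CIdx n →₀ L` of `F_q`-linear
polynomials; `tauOp`, `dsOp`, `deltaOp` are the operators `τ`, `d_s`, `Δ_j`, and
`monOp` is the monomial operator `τ^l ∘ d_s^μ ∘ Δ₁^{i₁} ∘ … ∘ Δ_n^{i_n}`.
-/

/-- Index set of the monomial basis `e(m, k₁, …, k_n)` with `m ≤ min(k₁, …, k_n)`. -/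
def CIdx (n : ℕ) : Type := {v : ℕ × (Fin n → ℕ) // ∀ j, v.1 ≤ v.2 j}

/-- `(m, k⃗) ↦ (m+1, k⃗+1)`. -/
def shiftUp {n : ℕ} (i : CIdx n) : CIdx n :=
  ⟨(i.1.1 + 1, fun j => i.1.2 j + 1), fun j => Nat.succ_le_succ (i.2 j)⟩

/-- `(m, k⃗) ↦ (m-1, k⃗-1)` (truncated subtraction). -/
def shiftDown {n : ℕ} (i : CIdx n) : CIdx n :=
  ⟨(i.1.1 - 1, fun j => i.1.2 j - 1), fun j => Nat.sub_le_sub_right (i.2 j) 1⟩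

/-- The operator `τ` : `τ(a·e(m,k⃗)) = a^q · e(m+1, k⃗+1)`. -/
noncomputable def tauOp (L : Type) [Field L] (q n : ℕ) :
    (CIdx n →₀ L) → (CIdx n →₀ L) :=
  fun f => f.sum fun i a => Finsupp.single (shiftUp i) (a ^ q)

/-- The Carlitz derivative `d_s` : `d_s(a·e(m,k⃗)) = a^{1/q}·[m]^{1/q}·e(m-1,k⃗-1)`
(which vanishes for `m = 0` since `[0] = x^{q^0} - x = 0` and `root 0 = 0`). -/
noncomputable def dsOp (L : Type) [Field L] (root : L → L) (x : L) (q n : ℕ) :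
    (CIdx n →₀ L) → (CIdx n →₀ L) :=
  fun f => f.sum fun i a =>
    Finsupp.single (shiftDown i) (root (x ^ q ^ i.1.1 - x) * root a)

/-- The operator `Δ_j` : `Δ_j(a·e(m,k⃗)) = [k_j]·a·e(m,k⃗)`. -/
noncomputable def deltaOp (L : Type) [Field L] (x : L) (q n : ℕ) (j : Fin n) :
    (CIdx n →₀ L) → (CIdx n →₀ L) :=
  fun f => f.sum fun i a => Finsupp.single i ((x ^ q ^ i.1.2 j - x) * a)

/-- The monomial operator `τ^l ∘ d_s^μ ∘ Δ₁^{i₁} ∘ … ∘ Δ_n^{i_n}`. -/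
noncomputable def monOp (L : Type) [Field L] (root : L → L) (x : L) (q n : ℕ)
    (l μ : ℕ) (iv : Fin n → ℕ) : (CIdx n →₀ L) → (CIdx n →₀ L) :=
  (tauOp L q n)^[l] ∘ (dsOp L root x q n)^[μ] ∘
    (List.ofFn fun j : Fin n => (deltaOp L x q n j)^[iv j]).foldr (· ∘ ·) id

/-- the chain coefficient produced by iterating `d_s`. -/
noncomputable def dsC (L : Type) [Field L] (x : L) (q : ℕ) : ℕ → L
  | 0 => 1
  | (m+1) => (x ^ q ^ (m+1) - x) * (dsC L x q m) ^ q

section Helpers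

variable {L : Type} [Field L] {q n : ℕ} {x : L} {root : L → L}

theorem tauOp_single (hq0 : q ≠ 0) (i : CIdx n) (a : L) :
    tauOp L q n (Finsupp.single i a) = Finsupp.single (shiftUp i) (a ^ q) := by
  unfold tauOp
  rw [Finsupp.sum_single_index]
  rw [zero_pow hq0, Finsupp.single_zero]

theorem tauOp_zero : tauOp L q n 0 = 0 := Finsupp.sum_zero_index

theorem shiftUp_iter_fst (l : ℕ) (i : CIdx n) : ((shiftUp^[l] i)).1.1 = i.1.1 + l := by
  induction l with
  | zero => rfl
  | succ l ih =>
    rw [Function.iterate_succ_apply']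
    show (shiftUp^[l] i).1.1 + 1 = _
    omega

theorem tauOp_iter (hq0 : q ≠ 0) (l : ℕ) (i : CIdx n) (a : L) :
    (tauOp L q n)^[l] (Finsupp.single i a) =
      Finsupp.single (shiftUp^[l] i) (a ^ q ^ l) := by
  induction l generalizing i a with
  | zero => simp
  | succ l ih =>
    rw [Function.iterate_succ_apply, tauOp_single hq0, ih, Function.iterate_succ_apply,
      ← pow_mul, ← pow_succ']

theorem deltaOp_single (j : Fin n) (i : CIdx n) (a : L) :
    deltaOp L x q n j (Finsupp.single i a) =
      Finsupp.single i ((x ^ q ^ (i.1.2 j) - x) * a) := by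
  unfold deltaOp
  rw [Finsupp.sum_single_index]
  rw [mul_zero, Finsupp.single_zero]

theorem deltaOp_iter (j : Fin n) (r : ℕ) (i : CIdx n) (a : L) :
    (deltaOp L x q n j)^[r] (Finsupp.single i a) =
      Finsupp.single i ((x ^ q ^ (i.1.2 j) - x) ^ r * a) := by
  induction r generalizing a with
  | zero => simp
  | succ r ih =>
    rw [Function.iterate_succ_apply', ih, deltaOp_single]
    congr 1
    ring

theorem foldr_single (iv : Fin n → ℕ) (ls : List (Fin n)) (i : CIdx n) (a : L) :
    ((ls.map (fun j => (deltaOp L x q n j)^[iv j])).foldr (· ∘ ·) id) (Finsupp.single i a)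
    = Finsupp.single i ((ls.map (fun j => (x ^ q ^ (i.1.2 j) - x) ^ iv j)).prod * a) := by
  induction ls with
  | nil => simp
  | cons j t ih =>
    simp only [List.map_cons, List.foldr_cons, Function.comp_apply, ih, deltaOp_iter,
      List.prod_cons, mul_assoc]

theorem foldr_ofFn_single (iv : Fin n → ℕ) (i : CIdx n) (a : L) :
    ((List.ofFn fun j : Fin n => (deltaOp L x q n j)^[iv j]).foldr (· ∘ ·) id)
      (Finsupp.single i a)
    = Finsupp.single i ((∏ j, (x ^ q ^ (i.1.2 j) - x) ^ iv j) * a) := by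
  rw [List.ofFn_eq_map, foldr_single, ← Fin.prod_univ_def]

end Helpers

section DsHelpers

variable {L : Type} [Field L] {q n : ℕ} {x : L} {root : L → L}

theorem dsOp_single (hr0 : root 0 = 0) (i : CIdx n) (a : L) :
    dsOp L root x q n (Finsupp.single i a) =
      Finsupp.single (shiftDown i) (root (x ^ q ^ i.1.1 - x) * root a) := by
  unfold dsOp
  rw [Finsupp.sum_single_index]
  rw [hr0, mul_zero, Finsupp.single_zero]

theorem dsOp_zero : dsOp L root x q n 0 = 0 := Finsupp.sum_zero_index

theorem dsOp_iter_zero (r : ℕ) : (dsOp L root x q n)^[r] 0 = 0 :=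
  Function.iterate_fixed dsOp_zero r

theorem tauOp_iter_zero (r : ℕ) : (tauOp L q n)^[r] 0 = 0 :=
  Function.iterate_fixed tauOp_zero r

theorem dsOp_iter_kill (hr0 : root 0 = 0) (m : ℕ) :
    ∀ (k : Fin n → ℕ) (h : ∀ j, m ≤ k j) (a : L),
    (dsOp L root x q n)^[m+1] (Finsupp.single (⟨(m, k), h⟩ : CIdx n) a) = 0 := by
  induction m with
  | zero =>
    intro k h a
    rw [Function.iterate_one, dsOp_single hr0 (⟨(0, k), h⟩ : CIdx n)]
    show Finsupp.single _ (root (x ^ q ^ 0 - x) * root a) = 0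
    rw [pow_zero, pow_one, sub_self, hr0, zero_mul, Finsupp.single_zero]
  | succ m ih =>
    intro k h a
    rw [Function.iterate_succ_apply, dsOp_single hr0 (⟨(m+1, k), h⟩ : CIdx n)]
    exact ih (fun j => k j - 1) (fun j => Nat.sub_le_sub_right (h j) 1) _

theorem dsOp_iter_gt (hr0 : root 0 = 0) {m μ : ℕ} (hlt : m < μ)
    (k : Fin n → ℕ) (h : ∀ j, m ≤ k j) (a : L) :
    (dsOp L root x q n)^[μ] (Finsupp.single (⟨(m, k), h⟩ : CIdx n) a) = 0 := by
  obtain ⟨d, rfl⟩ : ∃ d, μ = d + (m + 1) := ⟨μ - (m+1), by omega⟩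
  rw [Function.iterate_add_apply, dsOp_iter_kill hr0 m k h a, dsOp_iter_zero]

theorem dsOp_iter_exact (hr0 : root 0 = 0)
    (hrm : ∀ a b : L, root (a * b) = root a * root b)
    (hr2 : ∀ c : L, root (c ^ q) = c) (m : ℕ) :
    ∀ (k : Fin n → ℕ) (h : ∀ j, m ≤ k j) (a : L),
    (dsOp L root x q n)^[m] (Finsupp.single (⟨(m, k), h⟩ : CIdx n) a)
      = Finsupp.single (⟨(0, fun j => k j - m), fun j => Nat.zero_le _⟩ : CIdx n)
          (root^[m] (a * dsC L x q m)) := by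
  induction m with
  | zero =>
    intro k h a
    rw [Function.iterate_zero_apply, Function.iterate_zero_apply]
    rw [show (⟨(0, fun j => k j - 0), fun j => Nat.zero_le _⟩ : CIdx n) = ⟨(0, k), h⟩ from
      Subtype.ext (Prod.ext rfl (funext fun j => Nat.sub_zero _))]
    rw [show dsC L x q 0 = 1 from rfl, mul_one]
    rfl
  | succ m ih =>
    intro k h a
    rw [Function.iterate_succ_apply, dsOp_single hr0 (⟨(m+1, k), h⟩ : CIdx n)]
    rw [show shiftDown (⟨(m+1, k), h⟩ : CIdx n)
        = (⟨(m, fun j => k j - 1), fun j => Nat.sub_le_sub_right (h j) 1⟩ : CIdx n) from rfl]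
    rw [ih (fun j => k j - 1) _ _]
    congr 1
    · exact Subtype.ext (Prod.ext rfl (funext fun j => show k j - 1 - m = k j - (m+1) by omega))
    · rw [Function.iterate_succ_apply]
      congr 1
      show root (x ^ q ^ (m+1) - x) * root a * dsC L x q m
        = root (a * dsC L x q (m+1))
      rw [show dsC L x q (m+1) = (x ^ q ^ (m+1) - x) * (dsC L x q m) ^ q from rfl]
      rw [hrm, hrm, hr2]
      ring

end DsHelpers

theorem vandermonde_aux {L : Type} [Field L] (S : ℕ → L) (hS : Function.Injective S)
    (μ : ℕ) :
    ∀ (n : ℕ) (T : Finset (Fin n → ℕ)) (b : (Fin n → ℕ) → L),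
      (∀ k : Fin n → ℕ, (∀ j, μ ≤ k j) →
        ∑ iv ∈ T, b iv * ∏ j, S (k j) ^ iv j = 0) →
      ∀ iv ∈ T, b iv = 0 := by
  intro n
  induction n with
  | zero =>
    intro T b hyp iv hiv
    have h := hyp (fun _ => μ) (fun j => le_rfl)
    simp only [Finset.univ_eq_empty, Finset.prod_empty, mul_one] at h
    rw [← h]
    exact (Finset.sum_eq_single_of_mem iv hiv
      (fun c hc hne => absurd (Subsingleton.elim c iv) hne)).symm
  | succ n ih =>
    intro T b hyp iv₀ hiv₀
    set F : Finset (Fin (n+1) → ℕ) := T.filter (fun iv => iv 0 = iv₀ 0) with hF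
    have key : ∀ k' : Fin n → ℕ, (∀ j, μ ≤ k' j) →
        ∑ iv ∈ F, b iv * ∏ j : Fin n, S (k' j) ^ iv j.succ = 0 := by
      intro k' hk'
      set P : Polynomial L := ∑ iv ∈ T,
        Polynomial.monomial (iv 0) (b iv * ∏ j : Fin n, S (k' j) ^ iv j.succ) with hP
      have hroots : ∀ k0, μ ≤ k0 → P.IsRoot (S k0) := by
        intro k0 hk0
        have h := hyp (Fin.cons k0 k')
          (fun j => Fin.cases hk0 (fun j' => hk' j') j)
        unfold Polynomial.IsRoot
        rw [hP, Polynomial.eval_finset_sum]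
        rw [← h]
        apply Finset.sum_congr rfl
        intro iv _
        rw [Polynomial.eval_monomial, Fin.prod_univ_succ, Fin.cons_zero]
        simp only [Fin.cons_succ]
        ring
      have hP0 : P = 0 := by
        apply Polynomial.eq_zero_of_infinite_isRoot
        refine Set.Infinite.mono ?_ ((Set.Ici_infinite μ).image hS.injOn)
        rintro - ⟨k0, hk0, rfl⟩
        exact hroots k0 hk0
      have h := congrArg (fun Q => Polynomial.coeff Q (iv₀ 0)) hP0
      simp only [hP, Polynomial.finset_sum_coeff, Polynomial.coeff_monomial,
        Polynomial.coeff_zero] at h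
      rw [hF, Finset.sum_filter]
      exact h
    have hmem : iv₀ ∈ F := Finset.mem_filter.mpr ⟨hiv₀, rfl⟩
    have hinj : Set.InjOn Fin.tail (F : Set (Fin (n+1) → ℕ)) := by
      intro a ha b hb hab
      have ha0 : a 0 = iv₀ 0 := (Finset.mem_filter.mp ha).2
      have hb0 : b 0 = iv₀ 0 := (Finset.mem_filter.mp hb).2
      funext j
      refine Fin.cases ?_ ?_ j
      · rw [ha0, hb0]
      · intro j'
        exact congrFun hab j'
    have hIH := ih (F.image Fin.tail) (fun tl => b (Fin.cons (iv₀ 0) tl)) ?_ (Fin.tail iv₀)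
      (Finset.mem_image_of_mem _ hmem)
    · simp only [Fin.cons_self_tail] at hIH
      exact hIH
    · intro k' hk'
      rw [Finset.sum_image (fun a ha b hb hab => hinj ha hb hab)]
      rw [← key k' hk']
      apply Finset.sum_congr rfl
      intro iv hiv
      have h0 : iv 0 = iv₀ 0 := (Finset.mem_filter.mp hiv).2
      simp only [← h0, Fin.cons_self_tail]
      rfl

theorem addmap_sum {L : Type} [Field L] {f : L → L} (h0 : f 0 = 0)
    (hadd : ∀ a b, f (a + b) = f a + f b) {α : Type*} (s : Finset α) (g : α → L) :
    f (∑ t ∈ s, g t) = ∑ t ∈ s, f (g t) := by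
  classical
  induction s using Finset.induction with
  | empty => simpa
  | insert _ _ h ih => rw [Finset.sum_insert h, hadd, ih, Finset.sum_insert h]


/-- **Uniqueness of the canonical representation in the Carlitz ring.**
If a finitely supported `L`-linear combination of the monomial operators
`τ^l ∘ d_s^μ ∘ Δ₁^{i₁} ∘ … ∘ Δ_n^{i_n}` vanishes on all of `F̂_{n+1}`, then all
its coefficients vanish. -/
theorem carlitz_monomials_unique
    (p e q : ℕ) [Fact p.Prime] (he : 0 < e) (hq : q = p ^ e)
    (L : Type) [Field L] [IsAlgClosed L] [CharP L p]
    (φ : RatFunc (GaloisField p e) →+* L)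
    (root : L → L) (hroot1 : ∀ c, root c ^ q = c) (hroot2 : ∀ c, root (c ^ q) = c)
    (n : ℕ) (c : (ℕ × ℕ × (Fin n → ℕ)) →₀ L)
    (hzero : ∀ f : CIdx n →₀ L,
      (c.sum fun t a =>
        a • monOp L root (φ RatFunc.X) q n t.1 t.2.1 t.2.2 f) = 0) :
    c = 0 := by
  classical
  have hp2 : 2 ≤ p := (Fact.out : p.Prime).two_le
  have hq1 : 1 < q := by
    subst hq; exact Nat.one_lt_pow (by omega) (by omega)
  have hq0 : q ≠ 0 := by omega
  set x : L := φ RatFunc.X with hxdef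
  -- injectivity of powers of x
  have hxpow : ∀ a b : ℕ, x ^ a = x ^ b → a = b := by
    intro a b h
    have h2 : (RatFunc.X : RatFunc (GaloisField p e)) ^ a = RatFunc.X ^ b := by
      apply φ.injective
      rw [map_pow, map_pow]; exact h
    have h3 : (algebraMap (Polynomial (GaloisField p e)) (RatFunc (GaloisField p e)))
        (Polynomial.X ^ a)
        = (algebraMap (Polynomial (GaloisField p e)) (RatFunc (GaloisField p e)))
          (Polynomial.X ^ b) := by
      rw [map_pow, map_pow, RatFunc.algebraMap_X]; exact h2
    have h4 := RatFunc.algebraMap_injective (K := GaloisField p e) h3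
    have h5 := congrArg Polynomial.natDegree h4
    simpa using h5
  have hSinj : Function.Injective (fun k : ℕ => x ^ q ^ k - x) := by
    intro a b hab
    have : x ^ q ^ a = x ^ q ^ b := by
      have := sub_left_inj.mp hab
      exact this
    exact Nat.pow_right_injective hq1 (hxpow _ _ this)
  have hS1 : ∀ m : ℕ, 1 ≤ m → x ^ q ^ m - x ≠ 0 := by
    intro m hm h0
    have h1 : x ^ q ^ m - x = x ^ q ^ 0 - x := by
      rw [h0, pow_zero, pow_one, sub_self]
    have := hSinj h1
    omega
  -- root facts
  have hfrinj : ∀ a b : L, a ^ q = b ^ q → a = b := by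
    intro a b h; rw [← hroot2 a, ← hroot2 b, h]
  have hr0 : root (0 : L) = 0 := by
    have := hroot2 (0 : L); rwa [zero_pow hq0] at this
  have hrm : ∀ a b : L, root (a * b) = root a * root b := by
    intro a b
    apply hfrinj
    rw [mul_pow, hroot1, hroot1, hroot1]
  have haddpow : ∀ (m : ℕ) (a b : L), (a + b) ^ q ^ m = a ^ q ^ m + b ^ q ^ m := by
    intro m a b
    rw [hq, ← pow_mul]
    exact add_pow_char_pow a b p (e * m)
  have hradd : ∀ a b : L, root (a + b) = root a + root b := by
    intro a b
    apply hfrinj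
    rw [hroot1]
    have := haddpow 1 (root a) (root b)
    rw [pow_one] at this
    rw [this, hroot1, hroot1]
  have hrIter0 : ∀ m : ℕ, root^[m] (0 : L) = 0 := fun m => Function.iterate_fixed hr0 m
  have hrIterAdd : ∀ (m : ℕ) (a b : L), root^[m] (a + b) = root^[m] a + root^[m] b := by
    intro m
    induction m with
    | zero => intro a b; simp
    | succ m ih =>
      intro a b
      rw [Function.iterate_succ_apply, hradd, ih]
      rfl
  have hrIterMul : ∀ (m : ℕ) (a b : L), root^[m] (a * b) = root^[m] a * root^[m] b := by
    intro m
    induction m with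
    | zero => intro a b; simp
    | succ m ih =>
      intro a b
      rw [Function.iterate_succ_apply, hrm, ih]
      rfl
  have hrIterPow : ∀ (m : ℕ) (a : L), (root^[m] a) ^ q ^ m = a := by
    intro m
    induction m with
    | zero => intro a; simp
    | succ m ih =>
      intro a
      rw [Function.iterate_succ_apply, pow_succ, pow_mul, ih, hroot1]
  have hrPowIter : ∀ (m : ℕ) (a : L), root^[m] (a ^ q ^ m) = a := by
    intro m
    induction m with
    | zero => intro a; simp
    | succ m ih =>
      intro a
      rw [pow_succ, pow_mul, Function.iterate_succ_apply, hroot2, ih]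
  have hrIterInj : ∀ (m : ℕ) (a : L), root^[m] a = 0 → a = 0 := by
    intro m a h
    have := congrArg (fun z : L => z ^ q ^ m) h
    rw [hrIterPow m a, zero_pow (pow_ne_zero m hq0)] at this
    exact this
  have hdsC : ∀ m : ℕ, dsC L x q m ≠ 0 := by
    intro m
    induction m with
    | zero => show (1 : L) ≠ 0; exact one_ne_zero
    | succ m ih =>
      show (x ^ q ^ (m+1) - x) * (dsC L x q m) ^ q ≠ 0
      exact mul_ne_zero (hS1 (m+1) (by omega)) (pow_ne_zero _ ih)
  -- main induction on μ
  have main : ∀ μ l iv, c (l, μ, iv) = 0 := by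
    intro μ
    induction μ using Nat.strong_induction_on with
    | _ μ IH =>
      intro l iv
      set F : Finset (ℕ × ℕ × (Fin n → ℕ)) :=
        c.support.filter (fun t => t.1 = l ∧ t.2.1 = μ) with hFdef
      have hsum : ∀ (k : Fin n → ℕ) (hk : ∀ j, μ ≤ k j),
          ∑ t ∈ F, c t *
            (root^[μ] ((∏ j, (x ^ q ^ (k j) - x) ^ t.2.2 j) * 1 * dsC L x q μ)) ^ q ^ l
            = 0 := by
        intro k hk
        have h0 := DFunLike.congr_fun (hzero (Finsupp.single (⟨(μ, k), hk⟩ : CIdx n) 1))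
          (shiftUp^[l] (⟨(0, fun j => k j - μ), fun j => Nat.zero_le _⟩ : CIdx n))
        rw [Finsupp.sum_apply, Finsupp.zero_apply] at h0
        rw [Finsupp.sum] at h0
        have e1 : ∀ t ∈ F,
            (c t • monOp L root x q n t.1 t.2.1 t.2.2
                (Finsupp.single (⟨(μ, k), hk⟩ : CIdx n) 1))
              (shiftUp^[l] (⟨(0, fun j => k j - μ), fun j => Nat.zero_le _⟩ : CIdx n))
            = c t *
              (root^[μ] ((∏ j, (x ^ q ^ (k j) - x) ^ t.2.2 j) * 1 * dsC L x q μ)) ^ q ^ l := by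
          intro t ht
          obtain ⟨-, ht1, ht2⟩ :
              t ∈ c.support ∧ t.1 = l ∧ t.2.1 = μ := by
            have := Finset.mem_filter.mp ht
            exact ⟨this.1, this.2⟩
          simp only [monOp, Function.comp_apply]
          erw [foldr_ofFn_single (i := (⟨(μ, k), hk⟩ : CIdx n)), ht2,
            dsOp_iter_exact hr0 hrm hroot2 μ k hk, ht1, tauOp_iter hq0,
            Finsupp.smul_apply, Finsupp.single_eq_same, smul_eq_mul]
        have e0 : ∀ t ∈ c.support, ¬(t.1 = l ∧ t.2.1 = μ) →
            (c t • monOp L root x q n t.1 t.2.1 t.2.2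
                (Finsupp.single (⟨(μ, k), hk⟩ : CIdx n) 1))
              (shiftUp^[l] (⟨(0, fun j => k j - μ), fun j => Nat.zero_le _⟩ : CIdx n))
            = 0 := by
          intro t ht hnp
          rcases Nat.lt_trichotomy t.2.1 μ with hlt | heq | hgt
          · exact absurd (IH t.2.1 hlt t.1 t.2.2) (Finsupp.mem_support_iff.mp ht)
          · have htl : t.1 ≠ l := fun h => hnp ⟨h, heq⟩
            simp only [monOp, Function.comp_apply]
            erw [foldr_ofFn_single (i := (⟨(μ, k), hk⟩ : CIdx n)), heq,
              dsOp_iter_exact hr0 hrm hroot2 μ k hk, tauOp_iter hq0,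
              Finsupp.smul_apply, Finsupp.single_eq_of_ne, smul_zero]
            intro hidx
            apply htl
            have h5 := congrArg (fun z : CIdx n => z.1.1) hidx
            erw [shiftUp_iter_fst, shiftUp_iter_fst] at h5
            exact Nat.add_left_cancel h5.symm
          · simp only [monOp, Function.comp_apply]
            rw [foldr_ofFn_single (i := (⟨(μ, k), hk⟩ : CIdx n)), dsOp_iter_gt hr0 hgt k hk, tauOp_iter_zero]
            simp
        have h2 : ∑ t ∈ F,
            (c t • monOp L root x q n t.1 t.2.1 t.2.2
                (Finsupp.single (⟨(μ, k), hk⟩ : CIdx n) 1))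
              (shiftUp^[l] (⟨(0, fun j => k j - μ), fun j => Nat.zero_le _⟩ : CIdx n)) = 0 := by
          rw [hFdef, Finset.sum_filter_of_ne]
          · exact h0
          · intro t ht hne
            by_contra hnp
            exact hne (e0 t ht hnp)
        rw [← h2]
        exact Finset.sum_congr rfl (fun t ht => (e1 t ht).symm)
      -- transform the relation by the inverse twist
      have hsum2 : ∀ (k : Fin n → ℕ), (∀ j, μ ≤ k j) →
          ∑ iv' ∈ F.image (fun t => t.2.2),
            (root^[l] (c (l, μ, iv'))) ^ q ^ μ * ∏ j, (x ^ q ^ (k j) - x) ^ iv' j = 0 := by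
        intro k hk
        have hΘ0 : (root^[l] (0 : L)) ^ q ^ μ = 0 := by
          rw [hrIter0 l, zero_pow (pow_ne_zero μ hq0)]
        have hΘadd : ∀ a b : L, (root^[l] (a + b)) ^ q ^ μ
            = (root^[l] a) ^ q ^ μ + (root^[l] b) ^ q ^ μ := by
          intro a b
          rw [hrIterAdd l, haddpow μ]
        have h3' := addmap_sum (f := fun z : L => (root^[l] z) ^ q ^ μ) hΘ0 hΘadd F
          (fun t => c t *
            (root^[μ] ((∏ j, (x ^ q ^ (k j) - x) ^ t.2.2 j) * 1 * dsC L x q μ)) ^ q ^ l)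
        have hθsum : ∑ t ∈ F,
            (root^[l] (c t *
              (root^[μ] ((∏ j, (x ^ q ^ (k j) - x) ^ t.2.2 j) * 1 * dsC L x q μ)) ^ q ^ l))
              ^ q ^ μ = 0 := by
          calc _ = (root^[l] (∑ t ∈ F, c t *
              (root^[μ] ((∏ j, (x ^ q ^ (k j) - x) ^ t.2.2 j) * 1 * dsC L x q μ)) ^ q ^ l))
                ^ q ^ μ := h3'.symm
          _ = (root^[l] (0 : L)) ^ q ^ μ := by rw [hsum k hk]
          _ = 0 := hΘ0
        have h4 : ∑ t ∈ F,
            (root^[l] (c t)) ^ q ^ μ *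
              ((∏ j, (x ^ q ^ (k j) - x) ^ t.2.2 j) * 1 * dsC L x q μ) = 0 := by
          rw [← hθsum]
          apply Finset.sum_congr rfl
          intro t _
          rw [hrIterMul l, mul_pow, hrPowIter l, hrIterPow μ]
        have h5 : (∑ t ∈ F,
            (root^[l] (c t)) ^ q ^ μ * ∏ j, (x ^ q ^ (k j) - x) ^ t.2.2 j)
              * dsC L x q μ = 0 := by
          rw [Finset.sum_mul, ← h4]
          apply Finset.sum_congr rfl
          intro t _
          ring
        have h6 : ∑ t ∈ F,
            (root^[l] (c t)) ^ q ^ μ * ∏ j, (x ^ q ^ (k j) - x) ^ t.2.2 j = 0 :=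
          (mul_eq_zero.mp h5).resolve_right (hdsC μ)
        have h7 : ∑ t ∈ F,
            (root^[l] (c (l, μ, t.2.2))) ^ q ^ μ * ∏ j, (x ^ q ^ (k j) - x) ^ t.2.2 j = 0 := by
          rw [← h6]
          apply Finset.sum_congr rfl
          intro t ht
          obtain ⟨-, ht1, ht2⟩ := Finset.mem_filter.mp ht
          rw [show ((l, μ, t.2.2) : ℕ × ℕ × (Fin n → ℕ)) = t from
            Prod.ext ht1.symm (Prod.ext ht2.symm rfl)]
        rw [← h7]
        refine Finset.sum_image ?_
        intro t1 ht1 t2 ht2 h12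
        obtain ⟨-, h11, h12'⟩ := Finset.mem_filter.mp ht1
        obtain ⟨-, h21, h22'⟩ := Finset.mem_filter.mp ht2
        exact Prod.ext (h11.trans h21.symm) (Prod.ext (h12'.trans h22'.symm) h12)
      have hvdm := vandermonde_aux (fun k0 : ℕ => x ^ q ^ k0 - x) hSinj μ n
        (F.image (fun t => t.2.2))
        (fun iv' => (root^[l] (c (l, μ, iv'))) ^ q ^ μ) hsum2
      by_contra hne
      have hmemF : (l, μ, iv) ∈ F := by
        rw [hFdef]
        exact Finset.mem_filter.mpr ⟨Finsupp.mem_support_iff.mpr hne, rfl, rfl⟩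
      have himg : iv ∈ F.image (fun t => t.2.2) := Finset.mem_image_of_mem _ hmemF
      have hv := hvdm iv himg
      exact hne (hrIterInj l _ ((pow_eq_zero_iff (pow_ne_zero μ hq0)).mp hv))
  apply Finsupp.ext
  intro t
  rw [Finsupp.zero_apply]
  exact main t.2.1 t.1 t.2.2
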